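/- arXiv:1102.1419 — 3 statements merged into one kernel-verified Lean document; each statement's English description precedes it below -/
import Mathlib

section
/- Let (X,p) be a TVS-cone metric space over E with cone P, and equip X with the cone metric topology τ_p. Then (X, τ_p) is a paracompact topological space and a T4 space (Hausdorff and normal). -/
open Filter Topology

section Defs

variable {E : Type*} [AddCommGroup E] [Module ℝ E] [TopologicalSpace E]

/-- `P` is a closed, pointed convex cone with nonempty interior in the TVS `E`. -/
structure IsTVSCone (P : Set E) : Prop where
  add_mem : ∀ ⦃a⦄, a ∈ P → ∀ ⦃b⦄, b ∈ P → a + b ∈ P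
  smul_mem : ∀ (r : ℝ), 0 ≤ r → ∀ ⦃a⦄, a ∈ P → r • a ∈ P
  pointed : ∀ a, a ∈ P → -a ∈ P → a = 0
  isClosed : IsClosed P
  int_nonempty : (interior P).Nonempty

/-- `a ≤ b` with respect to the cone `P`. -/
def ConeLe (P : Set E) (a b : E) : Prop := b - a ∈ P

/-- `a ≪ b` with respect to the cone `P`. -/
def ConeLt (P : Set E) (a b : E) : Prop := b - a ∈ interior P

/-- `p : X × X → E` is a TVS-cone metric over the cone `P`. -/
structure IsConeMetric (P : Set E) {X : Type*} (p : X → X → E) : Prop where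
  nonneg : ∀ x y, ConeLe P 0 (p x y)
  eq_zero_iff : ∀ x y, p x y = 0 ↔ x = y
  symm : ∀ x y, p x y = p y x
  triangle : ∀ x y z, ConeLe P (p x y) (p x z + p z y)

/-- The sequence `x` cone-converges to `a`. -/
def ConeConverges (P : Set E) {X : Type*} (p : X → X → E) (x : ℕ → X) (a : X) : Prop :=
  ∀ c, c ∈ interior P → ∃ N, ∀ n ≥ N, ConeLt P (p (x n) a) c

/-- The sequence `x` is cone-Cauchy. -/
def ConeCauchy (P : Set E) {X : Type*} (p : X → X → E) (x : ℕ → X) : Prop :=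
  ∀ c, c ∈ interior P → ∃ N, ∀ n ≥ N, ∀ m ≥ N, ConeLt P (p (x n) (x m)) c

/-- `(X, p)` is cone-complete. -/
def ConeComplete (P : Set E) {X : Type*} (p : X → X → E) : Prop :=
  ∀ x : ℕ → X, ConeCauchy P p x → ∃ a, ConeConverges P p x a

/-- The nonlinear scalarization ξ_e(y) = inf {t : t • e - y ∈ P}. -/
noncomputable def xiScal (P : Set E) (e y : E) : ℝ := sInf {t : ℝ | t • e - y ∈ P}

/-- The open ball `B(x, c) = {y : p x y ≪ c}`. -/
def coneBall (P : Set E) {X : Type*} (p : X → X → E) (x : X) (c : E) : Set X :=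
  {y | ConeLt P (p x y) c}

/-- The cone metric topology `τ_p`, generated by the balls `B(x,c)`, `c ≫ 0`. -/
def coneTopology (P : Set E) {X : Type*} (p : X → X → E) : TopologicalSpace X :=
  TopologicalSpace.generateFrom {s | ∃ x c, c ∈ interior P ∧ s = coneBall P p x c}

end Defs


section Aux
set_option linter.unusedSectionVars false
variable {E : Type*} [AddCommGroup E] [Module ℝ E] [TopologicalSpace E]
  [IsTopologicalAddGroup E] [ContinuousSMul ℝ E]

lemma IsTVSCone.int_add_mem {P : Set E} (hP : IsTVSCone P) {a b : E}
    (ha : a ∈ interior P) (hb : b ∈ P) : a + b ∈ interior P := by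
  have h1 : (fun v => v + b) '' interior P ⊆ P := by
    rintro _ ⟨v, hv, rfl⟩; exact hP.add_mem (interior_subset hv) hb
  have h2 : IsOpen ((fun v => v + b) '' interior P) :=
    (isOpenMap_add_right b) _ isOpen_interior
  exact interior_maximal h1 h2 ⟨a, ha, rfl⟩

lemma IsTVSCone.smul_int {P : Set E} (hP : IsTVSCone P) {r : ℝ} (hr : 0 < r) {a : E}
    (ha : a ∈ interior P) : r • a ∈ interior P := by
  have h1 : (fun v : E => r • v) '' interior P ⊆ P := by
    rintro _ ⟨v, hv, rfl⟩; exact hP.smul_mem r hr.le (interior_subset hv)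
  have h2 : IsOpen ((fun v : E => r • v) '' interior P) :=
    (isOpenMap_smul₀ hr.ne') _ isOpen_interior
  exact interior_maximal h1 h2 ⟨a, ha, rfl⟩

lemma IsTVSCone.S_nonempty {P : Set E} (hP : IsTVSCone P) {e : E} (he : e ∈ interior P) (y : E) :
    {t : ℝ | t • e - y ∈ P}.Nonempty := by
  have h1 : Tendsto (fun n : ℕ => ((n:ℝ))⁻¹ • y) atTop (𝓝 0) := by
    simpa using (tendsto_inv_atTop_nhds_zero_nat (𝕜 := ℝ)).smul_const y
  have htend : Tendsto (fun n : ℕ => e - ((n:ℝ))⁻¹ • y) atTop (𝓝 e) := by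
    simpa using tendsto_const_nhds.sub h1
  have hev : ∀ᶠ n : ℕ in atTop, e - ((n:ℝ))⁻¹ • y ∈ interior P :=
    htend.eventually (isOpen_interior.eventually_mem he)
  obtain ⟨n, hn1, hn2⟩ := (hev.and (eventually_ge_atTop 1)).exists
  have hn0 : ((n:ℝ)) ≠ 0 := by exact_mod_cast Nat.one_le_iff_ne_zero.mp hn2
  refine ⟨(n:ℝ), ?_⟩
  have := hP.smul_mem (n:ℝ) (Nat.cast_nonneg n) (interior_subset hn1)
  rwa [smul_sub, smul_inv_smul₀ hn0] at this

lemma IsTVSCone.S_bddBelow {P : Set E} (hP : IsTVSCone P) {e : E} (he : e ∈ interior P)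
    (h0 : (0:E) ∉ interior P) (y : E) : BddBelow {t : ℝ | t • e - y ∈ P} := by
  by_contra hb
  have hf : ∀ n : ℕ, ∃ t : ℝ, t • e - y ∈ P ∧ t < -(n:ℝ) - 1 := by
    intro n
    rcases not_bddBelow_iff.mp hb (-(n:ℝ) - 1) with ⟨t, ht, hlt⟩
    exact ⟨t, ht, hlt⟩
  choose f hfP hflt using hf
  have hfneg : ∀ n, f n < 0 := fun n =>
    (hflt n).trans_le (by linarith [Nat.cast_nonneg (α := ℝ) n])
  have hmem : ∀ n, -e + (f n)⁻¹ • y ∈ P := by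
    intro n
    have h1 : (0:ℝ) ≤ -(f n)⁻¹ := by
      have : (f n)⁻¹ ≤ 0 := inv_nonpos.mpr (hfneg n).le
      linarith
    have := hP.smul_mem _ h1 (hfP n)
    have heq : (-(f n)⁻¹) • (f n • e - y) = -e + (f n)⁻¹ • y := by
      rw [neg_smul, smul_sub, smul_smul, inv_mul_cancel₀ (hfneg n).ne, one_smul, neg_sub]
      abel
    rwa [heq] at this
  have hbot : Tendsto f atTop atBot := by
    have hg : Tendsto (fun n : ℕ => -(n:ℝ) - 1) atTop atBot := by
      simpa [sub_eq_add_neg] using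
        tendsto_atBot_add_const_right atTop (-1 : ℝ)
          (tendsto_neg_atBot_iff.mpr tendsto_natCast_atTop_atTop)
    exact tendsto_atBot_mono (fun n => (hflt n).le) hg
  have hinv : Tendsto (fun n => (f n)⁻¹) atTop (𝓝 0) := by
    have h2 : Tendsto (fun n => (-(f n))⁻¹) atTop (𝓝 0) :=
      tendsto_inv_atTop_zero.comp (tendsto_neg_atTop_iff.mpr hbot)
    simpa [inv_neg] using h2.neg
  have hlim : Tendsto (fun n => -e + (f n)⁻¹ • y) atTop (𝓝 (-e)) := by
    simpa using tendsto_const_nhds.add (hinv.smul_const y)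
  have hne : -e ∈ P := hP.isClosed.mem_of_tendsto hlim (Eventually.of_forall hmem)
  have : e = 0 := hP.pointed e (interior_subset he) hne
  exact h0 (this ▸ he)


variable {P : Set E} {e : E}

lemma IsTVSCone.xi_mem (hP : IsTVSCone P) (he : e ∈ interior P)
    (h0 : (0:E) ∉ interior P) (y : E) : xiScal P e y • e - y ∈ P := by
  have hcl : IsClosed {t : ℝ | t • e - y ∈ P} :=
    hP.isClosed.preimage ((continuous_id.smul continuous_const).sub continuous_const)
  exact hcl.csInf_mem (hP.S_nonempty he y) (hP.S_bddBelow he h0 y)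

lemma IsTVSCone.xi_le (hP : IsTVSCone P) (he : e ∈ interior P)
    (h0 : (0:E) ∉ interior P) {y : E} {t : ℝ} (h : t • e - y ∈ P) : xiScal P e y ≤ t :=
  csInf_le (hP.S_bddBelow he h0 y) h

lemma IsTVSCone.xi_nonneg (hP : IsTVSCone P) (he : e ∈ interior P)
    (h0 : (0:E) ∉ interior P) {y : E} (hy : y ∈ P) : 0 ≤ xiScal P e y := by
  by_contra hneg
  push_neg at hneg
  set m := xiScal P e y with hm
  have h1 : m • e ∈ P := by
    have := hP.add_mem (hP.xi_mem he h0 y) hy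
    simpa using this
  have h2 : -(m • e) ∈ P := by
    have := hP.smul_mem (-m) (by linarith) (interior_subset he)
    rwa [neg_smul] at this
  have h3 : m • e = 0 := hP.pointed _ h1 h2
  have h4 : e = 0 := by
    have := congrArg (fun v => m⁻¹ • v) h3
    simpa [smul_smul, inv_mul_cancel₀ hneg.ne] using this
  exact h0 (h4 ▸ he)

lemma IsTVSCone.xi_zero (hP : IsTVSCone P) (he : e ∈ interior P)
    (h0 : (0:E) ∉ interior P) : xiScal P e 0 = 0 := by
  have hz : (0:E) ∈ P := by simpa using hP.smul_mem 0 le_rfl (interior_subset he)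
  refine le_antisymm (hP.xi_le he h0 ?_) (hP.xi_nonneg he h0 hz)
  simpa using hz

lemma IsTVSCone.xi_mono (hP : IsTVSCone P) (he : e ∈ interior P)
    (h0 : (0:E) ∉ interior P) {y z : E} (h : z - y ∈ P) : xiScal P e y ≤ xiScal P e z := by
  refine hP.xi_le he h0 ?_
  have := hP.add_mem (hP.xi_mem he h0 z) h
  have heq : xiScal P e z • e - z + (z - y) = xiScal P e z • e - y := by abel
  rwa [heq] at this

lemma IsTVSCone.xi_subadd (hP : IsTVSCone P) (he : e ∈ interior P)
    (h0 : (0:E) ∉ interior P) (y z : E) :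
    xiScal P e (y + z) ≤ xiScal P e y + xiScal P e z := by
  refine hP.xi_le he h0 ?_
  have := hP.add_mem (hP.xi_mem he h0 y) (hP.xi_mem he h0 z)
  have heq : xiScal P e y • e - y + (xiScal P e z • e - z)
      = (xiScal P e y + xiScal P e z) • e - (y + z) := by
    rw [add_smul]; abel
  rwa [heq] at this

lemma IsTVSCone.xi_lt_iff (hP : IsTVSCone P) (he : e ∈ interior P)
    (h0 : (0:E) ∉ interior P) {y : E} {t : ℝ} :
    xiScal P e y < t ↔ t • e - y ∈ interior P := by
  constructor
  · intro h
    obtain ⟨s, hs, hst⟩ := exists_lt_of_csInf_lt (hP.S_nonempty he y) h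
    have h1 : (t - s) • e ∈ interior P := hP.smul_int (by linarith) he
    have h2 := hP.int_add_mem h1 hs
    have heq : (t - s) • e + (s • e - y) = t • e - y := by rw [sub_smul]; abel
    rwa [heq] at h2
  · intro h
    have hcont : Tendsto (fun δ : ℝ => t • e - y - δ • e) (𝓝 0) (𝓝 (t • e - y)) := by
      have : Continuous (fun δ : ℝ => t • e - y - δ • e) :=
        continuous_const.sub (continuous_id.smul continuous_const)
      simpa using this.tendsto 0
    have hev := hcont.eventually (isOpen_interior.eventually_mem h)
    obtain ⟨ε, hε, hball⟩ := Metric.eventually_nhds_iff.mp hev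
    have hd : dist (ε/2) (0:ℝ) < ε := by
      rw [Real.dist_eq]; rw [sub_zero]; rw [abs_of_pos (by linarith)]; linarith
    have hmem := hball hd
    have hle : xiScal P e y ≤ t - ε/2 := by
      refine hP.xi_le he h0 ?_
      have heq : (t - ε/2) • e - y = t • e - y - (ε/2) • e := by rw [sub_smul]; abel
      rw [heq]; exact interior_subset hmem
    linarith

end Aux

/-- `(X, τ_p)` is paracompact and `T4`. -/
theorem stmt_8 {E X : Type*} [AddCommGroup E] [Module ℝ E] [TopologicalSpace E]
    [IsTopologicalAddGroup E] [ContinuousSMul ℝ E] [T2Space E] [Nonempty X]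
    (P : Set E) (hP : IsTVSCone P) (p : X → X → E) (hp : IsConeMetric P p) :
    @ParacompactSpace X (coneTopology P p) ∧ @T4Space X (coneTopology P p) := by
  have hpP : ∀ x y : X, p x y ∈ P := fun x y => by
    have := hp.nonneg x y
    simpa [ConeLe] using this
  by_cases h0 : (0:E) ∈ interior P
  · haveI : Subsingleton X := by
      constructor
      intro x y
      have hPuniv : ∀ v : E, v ∈ P := by
        intro v
        obtain ⟨t, ht⟩ := hP.S_nonempty (e := 0) h0 (-v)
        simpa using ht
      exact (hp.eq_zero_iff x y).mp (hP.pointed _ (hpP x y) (hPuniv _))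
    letI : TopologicalSpace X := coneTopology P p
    exact ⟨inferInstance, inferInstance⟩
  · obtain ⟨e, he⟩ := hP.int_nonempty
    letI m : MetricSpace X :=
      { dist := fun x y => xiScal P e (p x y)
        dist_self := fun x => by
          have hx : p x x = 0 := (hp.eq_zero_iff x x).mpr rfl
          simp only [hx]
          exact hP.xi_zero he h0
        dist_comm := fun x y => by simp only [hp.symm x y]
        dist_triangle := fun x y z => by
          have htr : (p x y + p y z) - p x z ∈ P := hp.triangle x z y
          have h1 := hP.xi_mono he h0 htr
          have h2 := hP.xi_subadd he h0 (p x y) (p y z)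
          exact h1.trans h2
        eq_of_dist_eq_zero := by
          intro x y h
          have hm := hP.xi_mem he h0 (p x y)
          have h' : xiScal P e (p x y) = 0 := h
          rw [h', zero_smul, zero_sub] at hm
          exact (hp.eq_zero_iff x y).mp (hP.pointed _ (hpP x y) hm) }
    have hdist : ∀ x y : X, dist x y = xiScal P e (p x y) := fun _ _ => rfl
    have hball : ∀ (x : X) (t : ℝ), coneBall P p x (t • e) = Metric.ball x t := by
      intro x t
      ext z
      have hd : dist z x = xiScal P e (p x z) := by rw [hdist, hp.symm]
      simp only [coneBall, ConeLt, Set.mem_setOf_eq, Metric.mem_ball, hd]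
      exact (hP.xi_lt_iff he h0).symm
    have heq : coneTopology P p = m.toUniformSpace.toTopologicalSpace := by
      refine le_antisymm ?_ (le_generateFrom ?_)
      · rw [TopologicalSpace.le_def]
        intro s hs
        have hs' : IsOpen s := hs
        rw [Metric.isOpen_iff] at hs'
        choose! ε hε hsub using hs'
        have hcover : s = ⋃₀ {u | ∃ x ∈ s, u = coneBall P p x (ε x • e)} := by
          apply Set.Subset.antisymm
          · intro x hx
            refine Set.mem_sUnion.mpr ⟨coneBall P p x (ε x • e), ⟨x, hx, rfl⟩, ?_⟩
            rw [hball]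
            exact Metric.mem_ball_self (hε x hx)
          · rintro z hz
            rcases Set.mem_sUnion.mp hz with ⟨u, ⟨x, hx, rfl⟩, hzu⟩
            rw [hball] at hzu
            exact hsub x hx hzu
        rw [hcover]
        refine TopologicalSpace.GenerateOpen.sUnion _ ?_
        rintro u ⟨x, hx, rfl⟩
        exact .basic _ ⟨x, _, hP.smul_int (hε x hx) he, rfl⟩
      · rintro s ⟨x, c, hc, rfl⟩
        rw [Metric.isOpen_iff]
        intro y hy
        have hy' : c - p x y ∈ interior P := hy
        have hcont : Tendsto (fun δ : ℝ => c - p x y - δ • e) (𝓝 0) (𝓝 (c - p x y)) := by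
          have : Continuous (fun δ : ℝ => c - p x y - δ • e) :=
            continuous_const.sub (continuous_id.smul continuous_const)
          simpa using this.tendsto 0
        have hev := hcont.eventually (isOpen_interior.eventually_mem hy')
        obtain ⟨ε, hε, hballε⟩ := Metric.eventually_nhds_iff.mp hev
        have hd2 : dist (ε/2) (0:ℝ) < ε := by
          rw [Real.dist_eq, sub_zero, abs_of_pos (by linarith)]; linarith
        have h1 : c - p x y - (ε/2) • e ∈ interior P := hballε hd2
        refine ⟨ε/2, by linarith, ?_⟩
        intro z hz
        have hz' : xiScal P e (p z y) < ε/2 := hz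
        have h2 : (ε/2) • e - p z y ∈ interior P := (hP.xi_lt_iff he h0).mp hz'
        rw [hp.symm z y] at h2
        have h3 : (p x y + p y z) - p x z ∈ P := hp.triangle x z y
        have h4 := hP.int_add_mem h1 (hP.add_mem (interior_subset h2) h3)
        have heq2 : c - p x y - (ε/2) • e + ((ε/2) • e - p y z + (p x y + p y z - p x z))
            = c - p x z := by abel
        rw [heq2] at h4
        exact h4
    rw [heq]
    exact ⟨inferInstance, inferInstance⟩
end

section
/- Let (X,p) be a TVS-cone metric space over a metrizable locally convex space E whose topology is generated by a countable family (q_k)_{k≥1} of seminorms, and let d_S(x,y) = inf{h(u) : u ∈ P, p(x,y) ≤ u} where h(u) = Σ_{k=1}^∞ 2^{−k}·q_k(u)/(1 + q_k(u)). If a sequence (x_n) in X satisfies d_S(x_n, x) → 0, then (x_n) cone-converges to x; hence the metric topology induced by d_S is finer than the cone metric topology τ_p. -/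
open Filter Topology

noncomputable def hFun {E : Type*} [AddCommGroup E] [Module ℝ E]
    (q : ℕ → Seminorm ℝ E) (u : E) : ℝ :=
  ∑' k : ℕ, (1 / 2 : ℝ) ^ (k + 1) * (q k u / (1 + q k u))

noncomputable def dS {E X : Type*} [AddCommGroup E] [Module ℝ E] [TopologicalSpace E]
    (q : ℕ → Seminorm ℝ E) (P : Set E) (p : X → X → E) (x y : X) : ℝ :=
  sInf {r : ℝ | ∃ u ∈ P, ConeLe P (p x y) u ∧ r = hFun q u}


section Aux

variable {E : Type*} [AddCommGroup E] [Module ℝ E]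

lemma hFun_term_nonneg (q : ℕ → Seminorm ℝ E) (u : E) (k : ℕ) :
    0 ≤ (1 / 2 : ℝ) ^ (k + 1) * (q k u / (1 + q k u)) := by
  have h0 := apply_nonneg (q k) u
  exact mul_nonneg (by positivity) (div_nonneg h0 (by linarith))

lemma hFun_summable (q : ℕ → Seminorm ℝ E) (u : E) :
    Summable (fun k : ℕ => (1 / 2 : ℝ) ^ (k + 1) * (q k u / (1 + q k u))) := by
  have hg0 : Summable (fun k : ℕ => (1/2:ℝ)^k * (1/2)) :=
    (summable_geometric_of_lt_one (by norm_num) (by norm_num : (1/2:ℝ) < 1)).mul_right _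
  have hg : Summable (fun k : ℕ => (1/2:ℝ)^(k+1)) := hg0.congr fun k => (pow_succ _ _).symm
  refine Summable.of_nonneg_of_le (hFun_term_nonneg q u) (fun k => ?_) hg
  have h0 := apply_nonneg (q k) u
  have h1 : q k u / (1 + q k u) ≤ 1 := by
    rw [div_le_one (by linarith)]; linarith
  calc (1/2:ℝ) ^ (k+1) * (q k u / (1 + q k u)) ≤ (1/2:ℝ)^(k+1) * 1 :=
        mul_le_mul_of_nonneg_left h1 (by positivity)
    _ = (1/2:ℝ)^(k+1) := mul_one _

lemma hFun_nonneg (q : ℕ → Seminorm ℝ E) (u : E) : 0 ≤ hFun q u :=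
  tsum_nonneg (hFun_term_nonneg q u)

lemma hFun_zero (q : ℕ → Seminorm ℝ E) : hFun q 0 = 0 := by
  simp [hFun]

lemma keyA [TopologicalSpace E] [IsTopologicalAddGroup E]
    (q : ℕ → Seminorm ℝ E) (hq : WithSeminorms q) {P : Set E} {c : E}
    (hc : c ∈ interior P) :
    ∃ δ > 0, ∀ u : E, hFun q u < δ → c - u ∈ interior P := by
  have hW : (fun u : E => c - u) ⁻¹' interior P ∈ nhds (0 : E) := by
    have hcont : Continuous fun u : E => c - u := continuous_const.sub continuous_id
    have h1 : interior P ∈ nhds ((fun u : E => c - u) 0) := by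
      simpa using isOpen_interior.mem_nhds hc
    exact hcont.continuousAt.preimage_mem_nhds h1
  rcases (hq.mem_nhds_iff 0 _).mp hW with ⟨s, ε, hε, hball⟩
  set M := s.sup id with hM
  refine ⟨(1/2:ℝ)^(M+1) * (ε/(1+ε)), by positivity, fun u hu => ?_⟩
  have hmem : u ∈ (s.sup q).ball 0 ε := by
    rw [Seminorm.mem_ball_zero]
    apply Seminorm.finset_sup_apply_lt hε
    intro k hk
    have hterm := Summable.le_tsum (hFun_summable q u) k (fun j _ => hFun_term_nonneg q u j)
    have hkM : k ≤ M := Finset.le_sup (f := id) hk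
    have hmono : ((1:ℝ)/2)^(M+1) ≤ (1/2:ℝ)^(k+1) :=
      pow_le_pow_of_le_one (by norm_num) (by norm_num) (by omega)
    have h1 : (1/2:ℝ)^(k+1) * (q k u / (1 + q k u)) < (1/2:ℝ)^(k+1) * (ε/(1+ε)) := by
      calc (1/2:ℝ)^(k+1) * (q k u / (1 + q k u)) ≤ hFun q u := hterm
        _ < (1/2:ℝ)^(M+1) * (ε/(1+ε)) := hu
        _ ≤ (1/2:ℝ)^(k+1) * (ε/(1+ε)) := mul_le_mul_of_nonneg_right hmono (by positivity)
    have h2 : q k u / (1 + q k u) < ε/(1+ε) :=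
      (mul_lt_mul_iff_right₀ (by positivity : (0:ℝ) < (1/2:ℝ)^(k+1))).mp h1
    have h0 := apply_nonneg (q k) u
    rw [div_lt_div_iff₀ (by linarith) (by linarith)] at h2
    nlinarith
  have := hball hmem
  simpa using this

lemma int_add_mem [TopologicalSpace E] [IsTopologicalAddGroup E] {P : Set E}
    (hP : IsTVSCone P) {v w : E} (hv : v ∈ interior P) (hw : w ∈ P) :
    v + w ∈ interior P := by
  have hopen : IsOpen ((fun x : E => w + x) '' interior P) :=
    (isOpenMap_add_left w) _ isOpen_interior
  have hsub : (fun x : E => w + x) '' interior P ⊆ P := by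
    rintro _ ⟨z, hz, rfl⟩
    exact hP.add_mem hw (interior_subset hz)
  have hmem : v + w ∈ (fun x : E => w + x) '' interior P :=
    ⟨v, hv, by simp [add_comm]⟩
  exact interior_maximal hsub hopen hmem

end Aux

/-- if `d_S (x_n) x → 0` then `x_n` cone-converges to `x`; hence the metric
topology induced by `d_S` is finer than the cone metric topology `τ_p`. -/
theorem stmt_13 {E X : Type*} [AddCommGroup E] [Module ℝ E] [TopologicalSpace E]
    [IsTopologicalAddGroup E] [ContinuousSMul ℝ E] [T2Space E] [Nonempty X]
    (q : ℕ → Seminorm ℝ E) (hq : WithSeminorms q)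
    (P : Set E) (hP : IsTVSCone P) (p : X → X → E) (hp : IsConeMetric P p) :
    (∀ (x : ℕ → X) (a : X),
        Tendsto (fun n => dS q P p (x n) a) atTop (nhds 0) → ConeConverges P p x a) ∧
    (TopologicalSpace.generateFrom
        {s : Set X | ∃ x : X, ∃ ε : ℝ, 0 < ε ∧ s = {y | dS q P p x y < ε}}
      ≤ coneTopology P p) := by
  have h0P : (0:E) ∈ P := by
    obtain ⟨e, he⟩ := hP.int_nonempty
    simpa using hP.smul_mem 0 le_rfl (interior_subset he)
  have hpP : ∀ x y : X, p x y ∈ P := fun x y => by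
    have := hp.nonneg x y; simpa [ConeLe] using this
  set S : X → X → Set ℝ := fun x y => {r : ℝ | ∃ u ∈ P, ConeLe P (p x y) u ∧ r = hFun q u}
    with hS
  have hSne : ∀ x y : X, (S x y).Nonempty := fun x y =>
    ⟨hFun q (p x y), p x y, hpP x y, by simp [ConeLe, h0P], rfl⟩
  have hSbdd : ∀ x y : X, BddBelow (S x y) := fun x y =>
    ⟨0, by rintro r ⟨u, -, -, rfl⟩; exact hFun_nonneg q u⟩
  have hkey : ∀ (x y : X) (δ : ℝ), dS q P p x y < δ →
      ∃ u ∈ P, ConeLe P (p x y) u ∧ hFun q u < δ := by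
    intro x y δ h
    obtain ⟨r, ⟨u, hu, hle, rfl⟩, hr⟩ := (csInf_lt_iff (hSbdd x y) (hSne x y)).mp h
    exact ⟨u, hu, hle, hr⟩
  have hconv : ∀ (x : ℕ → X) (a : X),
      Tendsto (fun n => dS q P p (x n) a) atTop (nhds 0) → ConeConverges P p x a := by
    intro x a htend c hc
    obtain ⟨δ, hδ, hA⟩ := keyA q hq hc
    obtain ⟨N, hN⟩ := eventually_atTop.mp (htend.eventually_lt_const hδ)
    refine ⟨N, fun n hn => ?_⟩
    obtain ⟨u, huP, hle, hfu⟩ := hkey (x n) a δ (hN n hn)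
    have h1 : c - u ∈ interior P := hA u hfu
    have h2 : u - p (x n) a ∈ P := hle
    have h3 : (c - u) + (u - p (x n) a) ∈ interior P := int_add_mem hP h1 h2
    have heq : (c - u) + (u - p (x n) a) = c - p (x n) a := by abel
    rw [heq] at h3
    exact h3
  refine ⟨hconv, ?_⟩
  apply le_generateFrom
  rintro s ⟨x, c, hc, rfl⟩
  have hsub : ∀ y ∈ coneBall P p x c, ∃ δ > 0,
      {z | dS q P p y z < δ} ⊆ coneBall P p x c := by
    intro y hy
    obtain ⟨δ, hδ, hA⟩ := keyA q hq (hy : c - p x y ∈ interior P)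
    refine ⟨δ, hδ, fun z hz => ?_⟩
    obtain ⟨u, huP, hle, hfu⟩ := hkey y z δ hz
    have h1 : (c - p x y) - u ∈ interior P := hA u hfu
    have h2 : u - p y z ∈ P := hle
    have h3 : (p x y + p y z) - p x z ∈ P := hp.triangle x z y
    have h4 := int_add_mem hP (int_add_mem hP h1 h2) h3
    have heq : ((c - p x y) - u) + (u - p y z) + ((p x y + p y z) - p x z)
        = c - p x z := by abel
    rw [heq] at h4
    exact h4
  have hdSself : ∀ (y : X) (δ : ℝ), 0 < δ → dS q P p y y < δ := by
    intro y δ hδ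
    have hmem : hFun q (p y y) ∈ S y y := ⟨p y y, hpP y y, by simp [ConeLe, h0P], rfl⟩
    have : dS q P p y y ≤ hFun q (p y y) := csInf_le (hSbdd y y) hmem
    have hpyy : p y y = 0 := (hp.eq_zero_iff y y).mpr rfl
    rw [hpyy, hFun_zero] at this
    linarith
  have key : coneBall P p x c = ⋃₀ {t : Set X |
      (∃ y : X, ∃ ε : ℝ, 0 < ε ∧ t = {z | dS q P p y z < ε}) ∧ t ⊆ coneBall P p x c} := by
    ext y
    constructor
    · intro hy
      obtain ⟨δ, hδ, hs⟩ := hsub y hy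
      exact ⟨{z | dS q P p y z < δ}, ⟨⟨y, δ, hδ, rfl⟩, hs⟩, hdSself y δ hδ⟩
    · rintro ⟨t, ⟨-, hs⟩, hyt⟩
      exact hs hyt
  rw [key]
  exact TopologicalSpace.GenerateOpen.sUnion _
    (fun t ht => TopologicalSpace.GenerateOpen.basic t ht.1)
end

section
/- Let (X,p) be a TVS-cone metric space over E with cone P, fix e ∈ int P, and let φ : E → E be continuous with φ(P) ⊆ P, φ increasing on P (if a, b ∈ P and a ≤ b then φ(a) ≤ φ(b)), φ(0) = 0, and φ(r·e) ≪ r·e for every real r > 0. Define ψ : [0,∞) → ℝ by ψ(r) = ξ_e(φ(r·e)). Then ψ is continuous and increasing on [0,∞), ψ(0) = 0, ψ(t) < t for every t > 0, and for any map T : X → X satisfying p(Tx, Ty) ≤ φ(p(x,y)) for all x, y ∈ X, one has d_p(Tx, Ty) ≤ ψ(d_p(x, y)) for all x, y ∈ X. -/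
open Filter Topology

section Aux


variable {E : Type*} [AddCommGroup E] [Module ℝ E] [TopologicalSpace E]
  [IsTopologicalAddGroup E] [ContinuousSMul ℝ E]
  {P : Set E} {e : E}

lemma aux_zero_mem (hP : IsTVSCone P) : (0:E) ∈ P := by
  obtain ⟨a, ha⟩ := hP.int_nonempty
  simpa using hP.smul_mem 0 le_rfl (interior_subset ha)

lemma aux_mem_of_smul (hP : IsTVSCone P) {s : ℝ} (hs : 0 < s) {v : E} (hv : s • v ∈ P) :
    v ∈ P := by
  have := hP.smul_mem s⁻¹ (by positivity) hv
  rwa [smul_smul, inv_mul_cancel₀ hs.ne', one_smul] at this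

lemma aux_S_nonempty (hP : IsTVSCone P) (he : e ∈ interior P) (y : E) :
    {t : ℝ | t • e - y ∈ P}.Nonempty := by
  have hc : Continuous fun s : ℝ => e - s • y := by fun_prop
  have h0 : (fun s : ℝ => e - s • y) 0 ∈ interior P := by simpa using he
  have hev : ∀ᶠ s in 𝓝[>] (0:ℝ), e - s • y ∈ interior P :=
    eventually_nhdsWithin_of_eventually_nhds
      (hc.continuousAt.preimage_mem_nhds (isOpen_interior.mem_nhds h0))
  obtain ⟨s, hsP, hs⟩ := (hev.and self_mem_nhdsWithin).exists
  refine ⟨s⁻¹, ?_⟩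
  have hs' : 0 < s := hs
  have := hP.smul_mem s⁻¹ (inv_nonneg.2 hs'.le) (interior_subset hsP)
  rwa [smul_sub, smul_smul, inv_mul_cancel₀ hs'.ne', one_smul] at this

lemma aux_S_upward (hP : IsTVSCone P) (he : e ∈ interior P) {y : E} {t s : ℝ}
    (ht : t • e - y ∈ P) (hts : t ≤ s) : s • e - y ∈ P := by
  have h2 : (s - t) • e ∈ P := hP.smul_mem _ (by linarith) (interior_subset he)
  have := hP.add_mem ht h2
  rwa [sub_smul, show t • e - y + (s • e - t • e) = s • e - y by abel] at this

lemma aux_S_closed (hP : IsTVSCone P) (y : E) : IsClosed {t : ℝ | t • e - y ∈ P} := by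
  have hc : Continuous fun t : ℝ => t • e - y := by fun_prop
  exact hP.isClosed.preimage hc

lemma aux_S_bdd (hP : IsTVSCone P) (he : e ∈ interior P) (he0 : e ≠ 0) (y : E) :
    BddBelow {t : ℝ | t • e - y ∈ P} := by
  by_contra hbdd
  have hex : ∀ n : ℕ, ∃ t : ℝ, t • e - y ∈ P ∧ t < -(n + 1) := by
    intro n
    rcases not_bddBelow_iff.1 hbdd (-(n + 1)) with ⟨t, ht, htn⟩
    exact ⟨t, ht, htn⟩
  choose u hu hun using hex
  have hneg : ∀ n, u n < 0 := fun n => lt_of_lt_of_le (hun n) (neg_nonpos.2 (by positivity))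
  have hmem : ∀ n, -e + (u n)⁻¹ • y ∈ P := by
    intro n
    have := hP.smul_mem (-(u n)⁻¹) (by simpa using (inv_nonpos.2 (hneg n).le)) (hu n)
    rwa [smul_sub, smul_smul, neg_mul, inv_mul_cancel₀ (hneg n).ne, neg_smul, neg_smul,
      one_smul, sub_neg_eq_add] at this
  have htend : Tendsto (fun n : ℕ => (u n)⁻¹) atTop (𝓝 0) := by
    apply squeeze_zero_norm (a := fun n : ℕ => 1 / (n + 1)) _ tendsto_one_div_add_atTop_nhds_zero_nat
    intro n
    show ‖(u n)⁻¹‖ ≤ 1 / ((n:ℝ) + 1)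
    rw [Real.norm_eq_abs, abs_inv, abs_of_neg (hneg n), one_div]
    apply inv_anti₀ (by positivity)
    have := hun n; linarith
  have htend2 : Tendsto (fun n : ℕ => -e + (u n)⁻¹ • y) atTop (𝓝 (-e)) := by
    have := (htend.smul_const y).const_add (-e)
    simpa using this
  have hne : -e ∈ P := hP.isClosed.mem_of_tendsto htend2 (Eventually.of_forall hmem)
  exact he0 (hP.pointed e (interior_subset he) hne)

lemma aux_xi_mem (hP : IsTVSCone P) (he : e ∈ interior P) (he0 : e ≠ 0) (y : E) :
    (xiScal P e y) • e - y ∈ P :=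
  (aux_S_closed hP y).csInf_mem (aux_S_nonempty hP he y) (aux_S_bdd hP he he0 y)

lemma aux_xi_le_iff (hP : IsTVSCone P) (he : e ∈ interior P) (he0 : e ≠ 0) {y : E} {t : ℝ} :
    xiScal P e y ≤ t ↔ t • e - y ∈ P := by
  constructor
  · intro h; exact aux_S_upward hP he (aux_xi_mem hP he he0 y) h
  · intro h; exact csInf_le (aux_S_bdd hP he he0 y) h

lemma aux_xi_mono (hP : IsTVSCone P) (he : e ∈ interior P) (he0 : e ≠ 0) {y z : E}
    (h : ConeLe P y z) : xiScal P e y ≤ xiScal P e z := by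
  rw [aux_xi_le_iff hP he he0]
  have h1 := aux_xi_mem hP he he0 z
  have := hP.add_mem h1 h
  rwa [show xiScal P e z • e - z + (z - y) = xiScal P e z • e - y by abel] at this

lemma aux_xi_lt (hP : IsTVSCone P) (he : e ∈ interior P) (he0 : e ≠ 0) {y : E} {t : ℝ}
    (h : t • e - y ∈ interior P) : xiScal P e y < t := by
  have hc : Continuous fun s : ℝ => s • e - y := by fun_prop
  have hev : ∀ᶠ s in 𝓝[<] t, s • e - y ∈ interior P :=
    eventually_nhdsWithin_of_eventually_nhds
      (hc.continuousAt.preimage_mem_nhds (isOpen_interior.mem_nhds h))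
  obtain ⟨s, hsP, hs⟩ := (hev.and self_mem_nhdsWithin).exists
  calc xiScal P e y ≤ s := (aux_xi_le_iff hP he he0).2 (interior_subset hsP)
    _ < t := hs

lemma aux_smul_int (hP : IsTVSCone P) {r : ℝ} (hr : 0 < r) {a : E} (ha : a ∈ interior P) :
    r • a ∈ interior P := by
  have hopen : IsOpen ((fun x : E => r • x) '' interior P) :=
    (isOpenMap_smul₀ hr.ne') _ isOpen_interior
  have hsub : (fun x : E => r • x) '' interior P ⊆ P := by
    rintro _ ⟨b, hb, rfl⟩
    exact hP.smul_mem r hr.le (interior_subset hb)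
  exact interior_maximal hsub hopen (Set.mem_image_of_mem _ ha)

lemma aux_add_int (hP : IsTVSCone P) {a b : E} (ha : a ∈ P) (hb : b ∈ interior P) :
    a + b ∈ interior P := by
  have hopen : IsOpen ((fun x : E => a + x) '' interior P) :=
    (isOpenMap_add_left a) _ isOpen_interior
  have hsub : (fun x : E => a + x) '' interior P ⊆ P := by
    rintro _ ⟨c, hc, rfl⟩
    exact hP.add_mem ha (interior_subset hc)
  exact interior_maximal hsub hopen (Set.mem_image_of_mem _ hb)

lemma aux_xi_smul (hP : IsTVSCone P) (he : e ∈ interior P) (he0 : e ≠ 0) (r : ℝ) :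
    xiScal P e (r • e) = r := by
  have h1 : xiScal P e (r • e) ≤ r :=
    (aux_xi_le_iff hP he he0).2 (by rw [sub_self]; exact aux_zero_mem hP)
  refine le_antisymm h1 ?_
  by_contra h
  push_neg at h
  have h2 := aux_xi_mem hP he he0 (r • e)
  rw [← sub_smul] at h2
  have h3 : -((xiScal P e (r • e) - r) • e) ∈ P := by
    rw [← neg_smul, neg_sub]
    exact hP.smul_mem _ (by linarith) (interior_subset he)
  have h4 := hP.pointed _ h2 h3
  rw [smul_eq_zero] at h4
  rcases h4 with h4 | h4
  · have : xiScal P e (r • e) = r := by linarith [sub_eq_zero.1 h4]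
    linarith
  · exact he0 h4

lemma aux_xi_cont (hP : IsTVSCone P) (he : e ∈ interior P) (he0 : e ≠ 0) :
    Continuous (xiScal P e) := by
  rw [continuous_iff_continuousAt]
  intro y0
  rw [ContinuousAt, tendsto_order]
  constructor
  · intro b hb
    have hU : IsOpen {y : E | b • e - y ∉ P} := by
      have hc : Continuous fun y : E => b • e - y := by fun_prop
      exact (hP.isClosed.preimage hc).isOpen_compl
    have hy0 : y0 ∈ {y : E | b • e - y ∉ P} := by
      intro hmem
      exact absurd ((aux_xi_le_iff hP he he0).2 hmem) (not_le.2 hb)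
    filter_upwards [hU.mem_nhds hy0] with y hy
    by_contra h
    push_neg at h
    exact hy ((aux_xi_le_iff hP he he0).1 h)
  · intro b hb
    have hc : Continuous fun y : E => b • e - y := by fun_prop
    have hV : IsOpen {y : E | b • e - y ∈ interior P} := isOpen_interior.preimage hc
    have hy0 : y0 ∈ {y : E | b • e - y ∈ interior P} := by
      have h1 := aux_xi_mem hP he he0 y0
      have h2 : (b - xiScal P e y0) • e ∈ interior P :=
        aux_smul_int hP (by linarith) he
      have h3 := aux_add_int hP h1 h2
      rwa [show xiScal P e y0 • e - y0 + (b - xiScal P e y0) • e = b • e - y0 by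
        rw [sub_smul]; abel] at h3
    filter_upwards [hV.mem_nhds hy0] with y hy
    exact aux_xi_lt hP he he0 hy

lemma aux_xi_nonneg (hP : IsTVSCone P) (he : e ∈ interior P) (he0 : e ≠ 0) {y : E}
    (hy : y ∈ P) : 0 ≤ xiScal P e y := by
  by_contra h
  push_neg at h
  have h1 := aux_xi_mem hP he he0 y
  have h2 : xiScal P e y • e ∈ P := by
    have := hP.add_mem h1 hy
    rwa [sub_add_cancel] at this
  have h3 : -(xiScal P e y • e) ∈ P := by
    have := hP.smul_mem (-(xiScal P e y)) (by linarith) (interior_subset he)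
    rwa [neg_smul] at this
  have := hP.pointed _ h2 h3
  rw [smul_eq_zero] at this
  rcases this with h | h
  · linarith
  · exact he0 h


lemma aux_coneLe_trans (hP : IsTVSCone P) {a b c : E} (h1 : ConeLe P a b)
    (h2 : ConeLe P b c) : ConeLe P a c := by
  have h3 : (c - b) + (b - a) ∈ P := hP.add_mem h2 h1
  show c - a ∈ P
  rwa [show c - b + (b - a) = c - a by abel] at h3

lemma aux_e_ne [Nontrivial E] (hP : IsTVSCone P) (he : e ∈ interior P) : e ≠ 0 := by
  intro h
  obtain ⟨a, ha⟩ := exists_ne (0:E)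
  have hall : ∀ v : E, v ∈ P := by
    intro v
    have hc : Continuous fun s : ℝ => s • v := by fun_prop
    have h0 : (fun s : ℝ => s • v) 0 ∈ interior P := by
      rw [h] at he
      simpa using he
    have hev : ∀ᶠ s in 𝓝[>] (0:ℝ), s • v ∈ interior P :=
      eventually_nhdsWithin_of_eventually_nhds
        (hc.continuousAt.preimage_mem_nhds (isOpen_interior.mem_nhds h0))
    obtain ⟨s, hsP, hs⟩ := (hev.and self_mem_nhdsWithin).exists
    exact aux_mem_of_smul hP hs (interior_subset hsP)
  exact ha (hP.pointed a (hall a) (hall (-a)))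

end Aux

/-- with `ψ r = ξ_e (φ (r • e))`, `ψ` is continuous and increasing on `[0,∞)`,
`ψ 0 = 0`, `ψ t < t` for `t > 0`, and any `T` with `p (Tx) (Ty) ≤ φ (p x y)` satisfies
`d_p (Tx) (Ty) ≤ ψ (d_p x y)`. -/
theorem stmt_18 {E X : Type*} [AddCommGroup E] [Module ℝ E] [TopologicalSpace E]
    [IsTopologicalAddGroup E] [ContinuousSMul ℝ E] [T2Space E] [Nonempty X]
    (P : Set E) (hP : IsTVSCone P) (p : X → X → E) (hp : IsConeMetric P p)
    (e : E) (he : e ∈ interior P) (φ : E → E) (hφcont : Continuous φ)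
    (hφP : ∀ a ∈ P, φ a ∈ P)
    (hφmono : ∀ a ∈ P, ∀ b ∈ P, ConeLe P a b → ConeLe P (φ a) (φ b))
    (hφ0 : φ 0 = 0)
    (hφlt : ∀ r : ℝ, 0 < r → ConeLt P (φ (r • e)) (r • e)) :
    ContinuousOn (fun r : ℝ => xiScal P e (φ (r • e))) (Set.Ici 0) ∧
    MonotoneOn (fun r : ℝ => xiScal P e (φ (r • e))) (Set.Ici 0) ∧
    xiScal P e (φ ((0 : ℝ) • e)) = 0 ∧
    (∀ t : ℝ, 0 < t → xiScal P e (φ (t • e)) < t) ∧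
    (∀ T : X → X, (∀ x y : X, ConeLe P (p (T x) (T y)) (φ (p x y))) →
      ∀ x y : X, xiScal P e (p (T x) (T y)) ≤ xiScal P e (φ ((xiScal P e (p x y)) • e))) := by
  rcases subsingleton_or_nontrivial E with hE | hE
  · have hPuniv : P = Set.univ := Set.eq_univ_of_forall fun x => by
      obtain ⟨a, ha⟩ := hP.int_nonempty
      exact (Subsingleton.elim x a) ▸ interior_subset ha
    have hxi : ∀ y : E, xiScal P e y = 0 := by
      intro y
      have hset : {t : ℝ | t • e - y ∈ P} = Set.univ := by simp [hPuniv]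
      rw [xiScal, hset, Real.sInf_of_not_bddBelow]
      rintro ⟨x, hx⟩
      have := hx (Set.mem_univ (x - 1))
      linarith
    refine ⟨?_, ?_, ?_, ?_, ?_⟩
    · simp only [hxi]; exact continuousOn_const
    · simp only [hxi]; exact monotoneOn_const
    · exact hxi _
    · intro t ht; rw [hxi]; exact ht
    · intro T hT x y; simp [hxi]
  · have he0 : e ≠ 0 := aux_e_ne hP he
    refine ⟨?_, ?_, ?_, ?_, ?_⟩
    · have hc : Continuous fun r : ℝ => xiScal P e (φ (r • e)) :=
        ((aux_xi_cont hP he he0).comp hφcont).comp (by fun_prop)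
      exact hc.continuousOn
    · intro a ha b hb hab
      apply aux_xi_mono hP he he0
      refine hφmono _ (hP.smul_mem a ha (interior_subset he)) _
        (hP.smul_mem b hb (interior_subset he)) ?_
      show b • e - a • e ∈ P
      rw [← sub_smul]
      exact hP.smul_mem _ (by linarith) (interior_subset he)
    · rw [zero_smul, hφ0]
      have := aux_xi_smul hP he he0 0
      rwa [zero_smul] at this
    · intro t ht
      exact aux_xi_lt hP he he0 (hφlt t ht)
    · intro T hT x y
      have hpP : p x y ∈ P := by
        have h0 : p x y - 0 ∈ P := hp.nonneg x y
        rwa [sub_zero] at h0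
      have hm : 0 ≤ xiScal P e (p x y) := aux_xi_nonneg hP he he0 hpP
      have h1 : ConeLe P (φ (p x y)) (φ (xiScal P e (p x y) • e)) :=
        hφmono _ hpP _ (hP.smul_mem _ hm (interior_subset he))
          (aux_xi_mem hP he he0 (p x y))
      have h3 : ConeLe P (p (T x) (T y)) (φ (xiScal P e (p x y) • e)) :=
        aux_coneLe_trans hP (hT x y) h1
      exact aux_xi_mono hP he he0 h3
end
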